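/- Let U ⊆ ℂ be open and star-shaped with respect to the point z (for every w ∈ U the segment from z to w lies in U), let f : ℂ → ℂ be analytic and nonzero at every point of U, and let Δz ∈ ℂ be nonzero with z + Δz ∈ U. Then for every real r > 1 the series ∑_{n=1}^{∞} Log( f(z + ((r−1)/r^n)·Δz) / f(z) ) converges absolutely, where Log is the principal branch of the complex logarithm, and f′(z) = (f(z)/Δz) · lim_{r→1⁺} ∑_{n=1}^{∞} Log( f(z + ((r−1)/r^n)·Δz) / f(z) ). In particular, the derivative is obtained without letting Δz → 0: taking the limit r ↓ 1 suffices. (Product Derivative.) -/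

import Mathlib

open Topology Filter

/-- Product Derivative: if `U` is open and star-shaped with respect to `z`,
`f` is analytic and nonzero on `U`, `Δz ≠ 0` and `z + Δz ∈ U`, then for every real `r > 1`
the series `∑_{n≥1} Log (f (z + ((r-1)/r^n) Δz) / f z)` converges absolutely, and
`f'(z) = (f z / Δz) · lim_{r→1⁺} ∑_{n≥1} Log (f (z + ((r-1)/r^n) Δz) / f z)`. -/

lemma geom_hasSum {r : ℝ} (hr : 1 < r) :
    HasSum (fun n : ℕ+ => (r - 1) / r ^ (n : ℕ)) 1 := by
  have hr0 : (0:ℝ) < r := lt_trans one_pos hr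
  have hr1 : r - 1 ≠ 0 := by linarith
  have h1 : HasSum (fun n : ℕ => (1/r)^n) (1 - 1/r)⁻¹ :=
    hasSum_geometric_of_lt_one (by positivity) (by rw [div_lt_one hr0]; exact hr)
  have h3 := h1.mul_left ((r-1)/r)
  have he : (fun n : ℕ => ((r-1)/r) * (1/r)^n) = fun n : ℕ => (r-1)/r^(n+1) := by
    funext n
    ring
  have hv : ((r-1)/r) * (1 - 1/r)⁻¹ = 1 := by field_simp
  rw [he, hv] at h3
  rw [← Equiv.pnatEquivNat.symm.hasSum_iff]
  exact h3

lemma key (g : ℂ → ℂ) (a : ℂ) (hg : HasDerivAt g a 0) (hg0 : g 0 = 0) :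
    (∀ r : ℝ, 1 < r →
      Summable (fun n : ℕ+ => ‖g ((((r - 1) / r ^ (n : ℕ) : ℝ)) : ℂ)‖)) ∧
    Filter.Tendsto (fun r : ℝ => ∑' n : ℕ+, g ((((r - 1) / r ^ (n : ℕ) : ℝ)) : ℂ))
      (𝓝[>] (1 : ℝ)) (𝓝 a) := by
  have hlo : (fun t : ℂ => g t - t * a) =o[𝓝 (0:ℂ)] (fun t => t) := by
    have h := hasDerivAt_iff_isLittleO.mp hg
    simpa [hg0, smul_eq_mul] using h
  have hq : ∀ ε : ℝ, 0 < ε → ∃ δ > 0, ∀ t : ℂ, ‖t‖ < δ → ‖g t - t * a‖ ≤ ε * ‖t‖ := by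
    intro ε hε
    have h := hlo.def hε
    rw [Metric.eventually_nhds_iff] at h
    obtain ⟨δ, hδ, h⟩ := h
    exact ⟨δ, hδ, fun t ht => by simpa using h (by simpa using ht)⟩
  constructor
  · intro r hr
    have hr0 : (0:ℝ) < r := lt_trans one_pos hr
    obtain ⟨δ, hδ, hb⟩ := hq 1 one_pos
    set T : ℕ → ℝ := fun n => (r - 1) / r ^ (n + 1) with hT
    have hrm : (0:ℝ) < r - 1 := by linarith
    have hTpos : ∀ n, 0 < T n := fun n => div_pos hrm (by positivity)
    have hTlim : Filter.Tendsto T Filter.atTop (𝓝 0) := by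
      have h1 : Filter.Tendsto (fun n : ℕ => (1/r)^(n+1)) Filter.atTop (𝓝 0) := by
        have := tendsto_pow_atTop_nhds_zero_of_lt_one
          (le_of_lt (by positivity : (0:ℝ) < 1/r)) (by rw [div_lt_one hr0]; exact hr)
        exact this.comp (Filter.tendsto_add_atTop_nat 1)
      have := h1.const_mul (r - 1)
      rw [mul_zero] at this
      convert this using 2 with n
      rw [div_pow, one_pow]
      ring
    have hsum : Summable (fun n : ℕ => ‖g ((T n : ℝ) : ℂ)‖) := by
      apply summable_of_isBigO_nat (summable_geometric_of_lt_one
        (le_of_lt (by positivity : (0:ℝ) < 1/r)) (by rw [div_lt_one hr0]; exact hr))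
      apply Asymptotics.IsBigO.of_bound ((1 + ‖a‖) * (r - 1))
      have hev : ∀ᶠ n : ℕ in Filter.atTop, T n < δ :=
        hTlim.eventually (Filter.Tendsto.eventually_lt_const hδ Filter.tendsto_id)
      filter_upwards [hev] with n hn
      have hnormT : ‖((T n : ℝ) : ℂ)‖ = T n := by
        rw [Complex.norm_real, Real.norm_eq_abs, abs_of_pos (hTpos n)]
      have h1 : ‖g ((T n : ℝ) : ℂ)‖ ≤ (1 + ‖a‖) * T n := by
        have h2 := hb ((T n : ℝ) : ℂ) (by rw [hnormT]; exact hn)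
        calc ‖g ((T n : ℝ) : ℂ)‖
            ≤ ‖g ((T n : ℝ) : ℂ) - ((T n : ℝ) : ℂ) * a‖ + ‖((T n : ℝ) : ℂ) * a‖ := by
              simpa using norm_add_le (g ((T n : ℝ) : ℂ) - ((T n : ℝ) : ℂ) * a) (((T n : ℝ) : ℂ) * a)
          _ ≤ 1 * ‖((T n : ℝ) : ℂ)‖ + ‖((T n : ℝ) : ℂ)‖ * ‖a‖ :=
              add_le_add h2 (norm_mul_le _ _)
          _ = (1 + ‖a‖) * T n := by rw [hnormT]; ring
      have hTeq : T n = (r - 1) * (1/r)^(n+1) := by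
        rw [hT]
        rw [div_pow, one_pow]
        ring
      have hTle : T n ≤ (r - 1) * (1/r)^n := by
        rw [hTeq]
        have hp : ((1:ℝ)/r)^(n+1) ≤ (1/r)^n :=
          pow_le_pow_of_le_one (le_of_lt (by positivity : (0:ℝ) < 1/r))
            (by rw [div_le_one hr0]; linarith) (Nat.le_succ n)
        exact mul_le_mul_of_nonneg_left hp (le_of_lt hrm)
      calc ‖‖g ((T n : ℝ) : ℂ)‖‖ = ‖g ((T n : ℝ) : ℂ)‖ := norm_norm _
        _ ≤ (1 + ‖a‖) * T n := h1
        _ ≤ (1 + ‖a‖) * ((r-1) * (1/r)^n) := by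
            apply mul_le_mul_of_nonneg_left hTle (by positivity)
        _ = (1 + ‖a‖) * (r - 1) * (1/r)^n := by ring
        _ ≤ (1 + ‖a‖) * (r - 1) * ‖(1/r)^n‖ := by
            rw [Real.norm_eq_abs, abs_of_nonneg (by positivity)]
    rw [← Equiv.pnatEquivNat.symm.summable_iff]
    exact hsum
  · rw [Metric.tendsto_nhdsWithin_nhds]
    intro ε hε
    obtain ⟨δ, hδ, hb⟩ := hq (ε/2) (by linarith)
    refine ⟨δ, hδ, ?_⟩
    intro r hrS hdist
    have hr : (1:ℝ) < r := hrS
    have hr0 : (0:ℝ) < r := lt_trans one_pos hr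
    have hrm : (0:ℝ) < r - 1 := by linarith
    have hrd : r - 1 < δ := by
      rw [Real.dist_eq] at hdist
      rwa [abs_of_pos hrm] at hdist
    set T : ℕ+ → ℝ := fun n => (r - 1) / r ^ (n : ℕ) with hT
    have hTpos : ∀ n, 0 < T n := fun n => div_pos hrm (by positivity)
    have hTle : ∀ n : ℕ+, T n ≤ r - 1 := by
      intro n
      have h1 : (1:ℝ) ≤ r ^ (n:ℕ) := one_le_pow₀ (le_of_lt hr)
      exact div_le_self (le_of_lt hrm) h1
    have hnormT : ∀ n, ‖((T n : ℝ) : ℂ)‖ = T n := fun n => by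
      rw [Complex.norm_real, Real.norm_eq_abs, abs_of_pos (hTpos n)]
    have hTs : HasSum T 1 := geom_hasSum hr
    have hbound : ∀ n, ‖g ((T n : ℝ) : ℂ) - ((T n : ℝ) : ℂ) * a‖ ≤ ε/2 * T n := by
      intro n
      have h2 := hb ((T n : ℝ) : ℂ)
        (by rw [hnormT]; exact lt_of_le_of_lt (hTle n) hrd)
      rwa [hnormT] at h2
    have hgs : Summable (fun n => g ((T n : ℝ) : ℂ)) := by
      apply Summable.of_norm_bounded ((hTs.summable).mul_left (ε/2 + ‖a‖))
      intro n
      calc ‖g ((T n : ℝ) : ℂ)‖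
          ≤ ‖g ((T n : ℝ) : ℂ) - ((T n : ℝ) : ℂ) * a‖ + ‖((T n : ℝ) : ℂ) * a‖ := by
            simpa using norm_add_le (g ((T n : ℝ) : ℂ) - ((T n : ℝ) : ℂ) * a) (((T n : ℝ) : ℂ) * a)
        _ ≤ ε/2 * T n + ‖((T n : ℝ) : ℂ)‖ * ‖a‖ := add_le_add (hbound n) (norm_mul_le _ _)
        _ = (ε/2 + ‖a‖) * T n := by rw [hnormT]; ring
    have hTsc : HasSum (fun n => ((T n : ℝ) : ℂ)) 1 := by
      have h3 := hTs.map Complex.ofRealHom Complex.continuous_ofReal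
      simpa [Function.comp_def] using h3
    have hA : HasSum (fun n => ((T n : ℝ) : ℂ) * a) a := by
      simpa using hTsc.mul_right a
    have hdiff : HasSum (fun n => g ((T n : ℝ) : ℂ) - ((T n : ℝ) : ℂ) * a)
        ((∑' n : ℕ+, g ((T n : ℝ) : ℂ)) - a) := hgs.hasSum.sub hA
    have hnd : Summable (fun n => ‖g ((T n : ℝ) : ℂ) - ((T n : ℝ) : ℂ) * a‖) :=
      Summable.of_nonneg_of_le (fun n => norm_nonneg _) hbound ((hTs.summable).mul_left (ε/2))
    have h5 : ‖(∑' n : ℕ+, g ((T n : ℝ) : ℂ)) - a‖ ≤ ε/2 := by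
      rw [← hdiff.tsum_eq]
      calc ‖∑' n : ℕ+, (g ((T n : ℝ) : ℂ) - ((T n : ℝ) : ℂ) * a)‖
          ≤ ∑' n : ℕ+, ‖g ((T n : ℝ) : ℂ) - ((T n : ℝ) : ℂ) * a‖ := norm_tsum_le_tsum_norm hnd
        _ ≤ ∑' n : ℕ+, ε/2 * T n :=
            Summable.tsum_le_tsum hbound hnd ((hTs.summable).mul_left (ε/2))
        _ = ε/2 := by rw [(hTs.mul_left (ε/2)).tsum_eq, mul_one]
    rw [dist_eq_norm]
    exact lt_of_le_of_lt h5 (by linarith)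

theorem stmt_8 (U : Set ℂ) (hU : IsOpen U) (z : ℂ) (hz : z ∈ U)
    (hstar : ∀ w ∈ U, segment ℝ z w ⊆ U)
    (f : ℂ → ℂ)
    (hf : ∀ w ∈ U, AnalyticAt ℂ f w)
    (hfne : ∀ w ∈ U, f w ≠ 0)
    (Δz : ℂ) (hΔ : Δz ≠ 0) (hzΔ : z + Δz ∈ U) :
    (∀ r : ℝ, 1 < r →
      Summable (fun n : ℕ+ =>
        ‖Complex.log (f (z + (((r - 1) / r ^ (n : ℕ) : ℝ) : ℂ) * Δz) / f z)‖)) ∧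
    Filter.Tendsto
      (fun r : ℝ =>
        f z / Δz *
          ∑' n : ℕ+, Complex.log (f (z + (((r - 1) / r ^ (n : ℕ) : ℝ) : ℂ) * Δz) / f z))
      (𝓝[>] (1 : ℝ)) (𝓝 (deriv f z)) := by
  have hc : f z ≠ 0 := hfne z hz
  set g : ℂ → ℂ := fun t => Complex.log (f (z + t * Δz) / f z) with hgdef
  set a : ℂ := deriv f z * Δz / f z with hadef
  have hfd : HasDerivAt f (deriv f z) z := (hf z hz).differentiableAt.hasDerivAt
  have h1 : HasDerivAt (fun t : ℂ => z + t * Δz) Δz 0 := by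
    simpa using ((hasDerivAt_id (0:ℂ)).mul_const Δz).const_add z
  have hfd' : HasDerivAt f (deriv f z) (z + 0 * Δz) := by simpa using hfd
  have h2 : HasDerivAt (fun t : ℂ => f (z + t * Δz)) (deriv f z * Δz) 0 :=
    hfd'.comp 0 h1
  have h3 : HasDerivAt (fun t : ℂ => f (z + t * Δz) / f z) (deriv f z * Δz / f z) 0 :=
    h2.div_const (f z)
  have hval : f (z + 0 * Δz) / f z = 1 := by
    simp [div_self hc]
  have hlog : HasDerivAt Complex.log ((1:ℂ))⁻¹ (f (z + 0 * Δz) / f z) := by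
    rw [hval]
    simpa using Complex.hasDerivAt_log Complex.one_mem_slitPlane
  have hg : HasDerivAt g a 0 := by
    have h4 := hlog.comp 0 h3
    simpa [hgdef, hadef, Function.comp_def] using h4
  have hg0 : g 0 = 0 := by
    simp [hgdef, div_self hc]
  obtain ⟨hs, ht⟩ := key g a hg hg0
  refine ⟨hs, ?_⟩
  have heq : f z / Δz * a = deriv f z := by
    rw [hadef]
    field_simp
  have := ht.const_mul (f z / Δz)
  rwa [heq] at this
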